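/- Let ∇ ⊂ ℝ⁴ be defined by x,y,z,w ≥ 0, 1-x-y ≥ 0, x+y-z ≥ 0, x+y-w ≥ 0. For every positive integer n, the number of lattice points in n∇ equals C(n+4,4) + 4·C(n+3,4) + C(n+2,4) = (6n⁴ + 36n³ + 78n² + 72n + 24)/24. -/

import Mathlib

open Pointwise

def nabla : Set (ℝ × ℝ × ℝ × ℝ) :=
  {p : ℝ × ℝ × ℝ × ℝ |
    0 ≤ p.1 ∧
    0 ≤ p.2.1 ∧
    0 ≤ p.2.2.1 ∧
    0 ≤ p.2.2.2 ∧
    0 ≤ 1 - p.1 - p.2.1 ∧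
    0 ≤ p.1 + p.2.1 - p.2.2.1 ∧
    0 ≤ p.1 + p.2.1 - p.2.2.2}

/-- The explicit finset of lattice points of `n • nabla`. -/
def latF (n : ℕ) : Finset (ℤ × ℤ × ℤ × ℤ) :=
  (Finset.range (n + 1)).biUnion fun s =>
    ((Finset.range (s + 1)) ×ˢ (Finset.range (s + 1)) ×ˢ (Finset.range (s + 1))).image
      fun t => ((t.1 : ℤ), (s : ℤ) - t.1, (t.2.1 : ℤ), (t.2.2 : ℤ))

lemma mem_latF (n : ℕ) (v : ℤ × ℤ × ℤ × ℤ) :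
    v ∈ latF n ↔ 0 ≤ v.1 ∧ 0 ≤ v.2.1 ∧ v.1 + v.2.1 ≤ (n : ℤ) ∧
      0 ≤ v.2.2.1 ∧ v.2.2.1 ≤ v.1 + v.2.1 ∧ 0 ≤ v.2.2.2 ∧ v.2.2.2 ≤ v.1 + v.2.1 := by
  obtain ⟨a, b, c, d⟩ := v
  simp only [latF, Finset.mem_biUnion, Finset.mem_image, Finset.mem_product,
    Finset.mem_range, Prod.ext_iff]
  constructor
  · rintro ⟨s, hs, ⟨t1, t2, t3⟩, ⟨ht1, ht2, ht3⟩, h1, h2, h3, h4⟩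
    simp only at h1 h2 h3 h4 ht1 ht2 ht3
    omega
  · rintro ⟨h1, h2, h3, h4, h5, h6, h7⟩
    refine ⟨(a + b).toNat, by omega, ⟨a.toNat, c.toNat, d.toNat⟩, ?_, ?_⟩
    · refine ⟨?_, ?_, ?_⟩ <;> simp <;> omega
    · refine ⟨?_, ?_, ?_, ?_⟩ <;> simp <;> omega

lemma sum_cubes (n : ℕ) : 4 * ∑ s ∈ Finset.range (n + 1), (s + 1) ^ 3 = ((n + 1) * (n + 2)) ^ 2 := by
  induction n with
  | zero => simp
  | succ m ih =>
    rw [Finset.sum_range_succ, Nat.mul_add, ih]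
    ring

lemma card_latF (n : ℕ) : 4 * (latF n).card = ((n + 1) * (n + 2)) ^ 2 := by
  have hdisj : ∀ s ∈ Finset.range (n + 1), ∀ t ∈ Finset.range (n + 1), s ≠ t →
      Disjoint (((Finset.range (s + 1)) ×ˢ (Finset.range (s + 1)) ×ˢ (Finset.range (s + 1))).image
          (fun t => ((t.1 : ℤ), (s : ℤ) - t.1, (t.2.1 : ℤ), (t.2.2 : ℤ))))
        (((Finset.range (t + 1)) ×ˢ (Finset.range (t + 1)) ×ˢ (Finset.range (t + 1))).image
          (fun u => ((u.1 : ℤ), (t : ℤ) - u.1, (u.2.1 : ℤ), (u.2.2 : ℤ)))) := by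
    intro s _ t _ hst
    rw [Finset.disjoint_left]
    rintro v hv hv'
    simp only [Finset.mem_image, Prod.ext_iff] at hv hv'
    obtain ⟨x, _, hx1, hx2, _⟩ := hv
    obtain ⟨y, _, hy1, hy2, _⟩ := hv'
    omega
  have hcard : (latF n).card = ∑ s ∈ Finset.range (n + 1), (s + 1) ^ 3 := by
    rw [latF, Finset.card_biUnion hdisj]
    refine Finset.sum_congr rfl fun s _ => ?_
    rw [Finset.card_image_of_injective]
    · simp only [Finset.card_product, Finset.card_range]; ring
    · rintro ⟨x1, x2, x3⟩ ⟨y1, y2, y3⟩ h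
      simp only [Prod.ext_iff] at h ⊢
      omega
  rw [hcard]
  exact sum_cubes n

lemma cQ (m : ℕ) : 24 * (m.choose 4 : ℚ) = (m.descFactorial 4 : ℚ) := by
  rw [Nat.descFactorial_eq_factorial_mul_choose]
  push_cast
  norm_num [Nat.factorial]

lemma choose_sum_eq (n : ℕ) (hn : 0 < n) :
    ((Nat.choose (n + 4) 4 + 4 * Nat.choose (n + 3) 4 + Nat.choose (n + 2) 4 : ℕ) : ℚ)
      = (6 * (n : ℚ) ^ 4 + 36 * (n : ℚ) ^ 3 + 78 * (n : ℚ) ^ 2 + 72 * (n : ℚ) ^ 1 + 24) / 24 := by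
  have d1 : (n + 4).descFactorial 4 = (n + 1) * (n + 2) * (n + 3) * (n + 4) := by
    simp [Nat.descFactorial_succ]; ring
  have d2 : (n + 3).descFactorial 4 = n * (n + 1) * (n + 2) * (n + 3) := by
    simp [Nat.descFactorial_succ]; ring
  have d3 : (n + 2).descFactorial 4 = (n - 1) * n * (n + 1) * (n + 2) := by
    simp [Nat.descFactorial_succ]
    ring_nf
  have e1 := cQ (n + 4); rw [d1] at e1
  have e2 := cQ (n + 3); rw [d2] at e2
  have e3 := cQ (n + 2); rw [d3] at e3
  push_cast [Nat.cast_sub hn] at e1 e2 e3 ⊢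
  linear_combination (e1 + 4 * e2 + e3) / 24

theorem stmt12 (n : ℕ) (hn : 0 < n) :
    {v : ℤ × ℤ × ℤ × ℤ | (((v.1 : ℝ), (v.2.1 : ℝ), (v.2.2.1 : ℝ), (v.2.2.2 : ℝ)) : ℝ × ℝ × ℝ × ℝ) ∈ (n : ℝ) • nabla}.ncard
        = Nat.choose (n + 4) 4 + 4 * Nat.choose (n + 3) 4 + Nat.choose (n + 2) 4 ∧
      ((Nat.choose (n + 4) 4 + 4 * Nat.choose (n + 3) 4 + Nat.choose (n + 2) 4 : ℚ))
        = (6 * (n : ℚ) ^ 4 + 36 * (n : ℚ) ^ 3 + 78 * (n : ℚ) ^ 2 + 72 * (n : ℚ) ^ 1 + 24) / 24 := by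
  have hn' : (0 : ℝ) < n := by exact_mod_cast hn
  have hne : (n : ℝ) ≠ 0 := hn'.ne'
  have part2 : ((Nat.choose (n + 4) 4 + 4 * Nat.choose (n + 3) 4 + Nat.choose (n + 2) 4 : ℚ))
      = (6 * (n : ℚ) ^ 4 + 36 * (n : ℚ) ^ 3 + 78 * (n : ℚ) ^ 2 + 72 * (n : ℚ) ^ 1 + 24) / 24 := by
    have := choose_sum_eq n hn
    push_cast at this ⊢
    linarith [this]
  refine ⟨?_, part2⟩
  -- characterize the set
  have hset : {v : ℤ × ℤ × ℤ × ℤ |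
      (((v.1 : ℝ), (v.2.1 : ℝ), (v.2.2.1 : ℝ), (v.2.2.2 : ℝ)) : ℝ × ℝ × ℝ × ℝ) ∈ (n : ℝ) • nabla}
      = ↑(latF n) := by
    ext v
    obtain ⟨a, b, c, d⟩ := v
    simp only [Set.mem_setOf_eq, Finset.coe_sort_coe, Finset.mem_coe, mem_latF]
    constructor
    · rintro ⟨q, hq, heq⟩
      obtain ⟨q1, q2, q3, q4⟩ := q
      obtain ⟨h1, h2, h3, h4, h5, h6, h7⟩ := hq
      simp only [Prod.smul_mk, smul_eq_mul, Prod.ext_iff] at heq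
      obtain ⟨e1, e2, e3, e4⟩ := heq
      have r1 : (0 : ℝ) ≤ (a : ℝ) := by rw [← e1]; exact mul_nonneg hn'.le h1
      have r2 : (0 : ℝ) ≤ (b : ℝ) := by rw [← e2]; exact mul_nonneg hn'.le h2
      have r3 : (a : ℝ) + (b : ℝ) ≤ (n : ℝ) := by
        rw [← e1, ← e2]; nlinarith [mul_nonneg hn'.le h5]
      have r4 : (0 : ℝ) ≤ (c : ℝ) := by rw [← e3]; exact mul_nonneg hn'.le h3
      have r5 : (c : ℝ) ≤ (a : ℝ) + (b : ℝ) := by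
        rw [← e1, ← e2, ← e3]; nlinarith [mul_nonneg hn'.le h6]
      have r6 : (0 : ℝ) ≤ (d : ℝ) := by rw [← e4]; exact mul_nonneg hn'.le h4
      have r7 : (d : ℝ) ≤ (a : ℝ) + (b : ℝ) := by
        rw [← e1, ← e2, ← e4]; nlinarith [mul_nonneg hn'.le h7]
      refine ⟨by exact_mod_cast r1, by exact_mod_cast r2, by exact_mod_cast r3,
        by exact_mod_cast r4, by exact_mod_cast r5, by exact_mod_cast r6, by exact_mod_cast r7⟩
    · rintro ⟨h1, h2, h3, h4, h5, h6, h7⟩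
      have r1 : (0 : ℝ) ≤ (a : ℝ) := by exact_mod_cast h1
      have r2 : (0 : ℝ) ≤ (b : ℝ) := by exact_mod_cast h2
      have r3 : (a : ℝ) + (b : ℝ) ≤ (n : ℝ) := by exact_mod_cast h3
      have r4 : (0 : ℝ) ≤ (c : ℝ) := by exact_mod_cast h4
      have r5 : (c : ℝ) ≤ (a : ℝ) + (b : ℝ) := by exact_mod_cast h5
      have r6 : (0 : ℝ) ≤ (d : ℝ) := by exact_mod_cast h6
      have r7 : (d : ℝ) ≤ (a : ℝ) + (b : ℝ) := by exact_mod_cast h7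
      refine ⟨((a : ℝ) / n, (b : ℝ) / n, (c : ℝ) / n, (d : ℝ) / n),
        ⟨by positivity, by positivity, by positivity, by positivity, ?_, ?_, ?_⟩, ?_⟩
      · show (0 : ℝ) ≤ 1 - (a : ℝ) / n - (b : ℝ) / n
        have h := (div_le_one hn').mpr r3
        have hh : (a : ℝ) / n + (b : ℝ) / n = ((a : ℝ) + b) / n := (add_div _ _ _).symm
        linarith
      · show (0 : ℝ) ≤ (a : ℝ) / n + (b : ℝ) / n - (c : ℝ) / n
        have h : (c : ℝ) / n ≤ ((a : ℝ) + b) / n := by gcongr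
        have hh : (a : ℝ) / n + (b : ℝ) / n = ((a : ℝ) + b) / n := (add_div _ _ _).symm
        linarith
      · show (0 : ℝ) ≤ (a : ℝ) / n + (b : ℝ) / n - (d : ℝ) / n
        have h : (d : ℝ) / n ≤ ((a : ℝ) + b) / n := by gcongr
        have hh : (a : ℝ) / n + (b : ℝ) / n = ((a : ℝ) + b) / n := (add_div _ _ _).symm
        linarith
      · simp only [Prod.smul_mk, smul_eq_mul, Prod.mk.injEq]
        refine ⟨?_, ?_, ?_, ?_⟩ <;> field_simp
  rw [hset, Set.ncard_coe_finset]
  -- now compare cardinalities via the factor-4 identity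
  have h4 : 4 * (latF n).card = ((n + 1) * (n + 2)) ^ 2 := card_latF n
  have h4' : 4 * (Nat.choose (n + 4) 4 + 4 * Nat.choose (n + 3) 4 + Nat.choose (n + 2) 4)
      = ((n + 1) * (n + 2)) ^ 2 := by
    have hq := choose_sum_eq n hn
    have : ((4 * (Nat.choose (n + 4) 4 + 4 * Nat.choose (n + 3) 4 + Nat.choose (n + 2) 4) : ℕ) : ℚ)
        = (((n + 1) * (n + 2)) ^ 2 : ℕ) := by
      push_cast
      push_cast at hq
      linarith [hq]
    exact_mod_cast this
  omega
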